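/- Let F be a field of prime characteristic p, let n ≥ s ≥ 1, and let μ be a p-regular partition of n−s. Then the pullback along the Bergeron–Garsia–Reutenauer map Δ_s : D_n(F) → D_{n−s}(F) of the simple module M_{μ,F} is isomorphic, as a D_n(F)-module, to the simple module M_{μ^{#s},F}. Equivalently, for every composition q of n, Σ_{i : q_i ≥ s} φ^{q^{(i)},F}(μ) = φ^{q,F}(μ^{#s}) in F. -/

import Mathlib

open scoped Classical TensorProduct

namespace Descent

/-- A list of positive integers summing to `n`: a composition of `n`. -/
def IsComposition (n : ℕ) (l : List ℕ) : Prop :=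
  (∀ x ∈ l, 0 < x) ∧ l.sum = n

/-- `Xi F n q` is the element `Ξ^q` of the group algebra `F[S_n]`: the sum of the
minimal-length representatives of the right cosets of the Young subgroup `S_q` in `S_n`,
i.e. the sum of all permutations that are increasing on each of the consecutive intervals
of lengths `q₀, q₁, …`. -/
noncomputable def Xi (O : Type) [CommRing O] (n : ℕ) (l : List ℕ) :
    MonoidAlgebra O (Equiv.Perm (Fin n)) :=
  ∑ σ ∈ Finset.univ.filter (fun σ : Equiv.Perm (Fin n) =>
      ∀ i j : Fin n, i < j →
        (∃ k, (l.take k).sum ≤ (i : ℕ) ∧ (j : ℕ) < (l.take (k + 1)).sum) →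
        σ i < σ j),
    MonoidAlgebra.single σ 1

/-- The descent algebra `D_n(O)`: the unital subalgebra of `O[S_n]` generated by the elements
`Ξ^q`, for `q` a composition of `n`; by Solomon's theorem it coincides with their `O`-linear
span. -/
noncomputable def descentAlgebra (O : Type) [CommRing O] (n : ℕ) :
    Subalgebra O (MonoidAlgebra O (Equiv.Perm (Fin n))) :=
  Algebra.adjoin O {x | ∃ l, IsComposition n l ∧ x = Xi O n l}

theorem xi_mem {O : Type} [CommRing O] {n : ℕ} {l : List ℕ} (hl : IsComposition n l) :
    Xi O n l ∈ descentAlgebra O n :=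
  Algebra.subset_adjoin ⟨l, hl, rfl⟩

/-- A partition of `n`: a weakly decreasing composition of `n`. -/
def IsPartition (n : ℕ) (l : List ℕ) : Prop :=
  IsComposition n l ∧ l.Pairwise (· ≥ ·)

/-- A partition is `p`-regular if no part occurs `p` or more times. -/
def IsPRegular (p : ℕ) (l : List ℕ) : Prop :=
  ∀ x ∈ l, l.count x < p

/-- The Young character value `φ^q(μ)`: the number of functions `f` from the (indices of the)
parts of `μ` to the (indices of the) parts of `q` such that, for every `j`, the parts of `μ`
mapped to `j` sum to `q_j`. -/
noncomputable def youngChar (q μ : List ℕ) : ℕ :=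
  (Finset.univ.filter (fun f : Fin μ.length → Fin q.length =>
    ∀ j : Fin q.length,
      (∑ i ∈ Finset.univ.filter (fun i => f i = j), μ.get i) = q.get j)).card

/-- `r` is a (strong) refinement of `q` if `r` splits into consecutive blocks whose entries
sum to the successive parts of `q`. -/
def IsRefinement (r q : List ℕ) : Prop :=
  ∃ rs : List (List ℕ), rs.flatten = r ∧ rs.map List.sum = q

/-- `r` is a weak refinement of `q`, written `r ≼ q`: some rearrangement of `r` is a
refinement of `q`. -/
def IsWeakRefinement (r q : List ℕ) : Prop :=
  ∃ r' : List ℕ, r'.Perm r ∧ IsRefinement r' q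

/-- `q^{(i)}`: the result of subtracting `s` from the `i`-th part of `q`, this part being
deleted if it equals `s`. -/
def reduceAt (l : List ℕ) (i s : ℕ) : List ℕ :=
  l.take i ++ (if l.getD i 0 = s then [] else [l.getD i 0 - s]) ++ l.drop (i + 1)

/-- The multiset obtained from a partition by replacing every part `m = p^a·m′` with
`p ∤ m′` by `p^a` copies of `m′`. -/
def pExpand (p : ℕ) (l : List ℕ) : Multiset ℕ :=
  (l : Multiset ℕ).bind fun m =>
    Multiset.replicate (p ^ (m.factorization p)) (m / p ^ (m.factorization p))

/-- `p`-equivalence of partitions, `λ ∼_p μ`. -/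
def PEquiv (p : ℕ) (l₁ l₂ : List ℕ) : Prop :=
  pExpand p l₁ = pExpand p l₂


section Aux

open MvPolynomial

variable (F : Type) [Field F]

/-- Young-character-style count with an arbitrary target vector `d`. -/
noncomputable def cnt (k : ℕ) (d : Fin k → ℕ) (μ : List ℕ) : ℕ :=
  (Finset.univ.filter (fun f : Fin μ.length → Fin k =>
    ∀ j : Fin k,
      (∑ i ∈ Finset.univ.filter (fun i => f i = j), μ.get i) = d j)).card

lemma cnt_congr {k : ℕ} {d d' : Fin k → ℕ} (h : ∀ j, d j = d' j) (μ : List ℕ) :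
    cnt k d μ = cnt k d' μ := by
  have : d = d' := funext h
  rw [this]

lemma youngChar_eq_cnt (q μ : List ℕ) :
    youngChar q μ = cnt q.length (fun j => q.get j) μ := rfl

lemma youngChar_eq_cnt' (r μ : List ℕ) (k : ℕ) (h : r.length = k) (d : Fin k → ℕ)
    (hd : ∀ j : Fin k, r.getD (j : ℕ) 0 = d j) :
    youngChar r μ = cnt k d μ := by
  subst h
  rw [youngChar_eq_cnt]
  refine cnt_congr (fun j => ?_) μ
  rw [← hd j, List.getD_eq_getElem _ _ j.isLt]
  simp [List.get_eq_getElem]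

/-- The generating polynomial `∏_{m ∈ l} (∑_j X_j^m)`. -/
noncomputable def phi (k : ℕ) (l : List ℕ) : MvPolynomial (Fin k) F :=
  (l.map (fun m => ∑ j : Fin k, (X j : MvPolynomial (Fin k) F) ^ m)).prod

lemma phi_append (k : ℕ) (l₁ l₂ : List ℕ) :
    phi F k (l₁ ++ l₂) = phi F k l₁ * phi F k l₂ := by
  simp [phi]

lemma prod_X_pow_eq_monomial (k L : ℕ) (c : Fin L → ℕ) (f : Fin L → Fin k)
    (s : Finset (Fin L)) :
    (∏ i ∈ s, (X (f i) : MvPolynomial (Fin k) F) ^ c i)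
      = monomial (∑ i ∈ s, Finsupp.single (f i) (c i)) (1 : F) := by
  classical
  induction s using Finset.induction with
  | empty => simp
  | insert _ _ hx ih =>
    rw [Finset.prod_insert hx, Finset.sum_insert hx, ih, X_pow_eq_monomial,
      monomial_mul, one_mul]

lemma coeff_phi (k : ℕ) (d : Fin k → ℕ) (μ : List ℕ) :
    MvPolynomial.coeff (Finsupp.equivFunOnFinite.symm d) (phi F k μ) = (cnt k d μ : F) := by
  classical
  have h1 : phi F k μ
      = ∑ f : Fin μ.length → Fin k,
          monomial (∑ i : Fin μ.length, Finsupp.single (f i) (μ.get i)) (1 : F) := by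
    rw [phi, ← Fin.prod_univ_fun_getElem μ (fun m => ∑ j : Fin k, (X j : MvPolynomial (Fin k) F) ^ m),
      Finset.prod_univ_sum]
    rw [Fintype.piFinset_univ]
    refine Finset.sum_congr rfl (fun f _ => ?_)
    rw [prod_X_pow_eq_monomial]
    simp [List.get_eq_getElem]
  rw [h1, MvPolynomial.coeff_sum]
  simp only [MvPolynomial.coeff_monomial]
  rw [Finset.sum_boole]
  norm_cast
  rw [cnt]
  have : (Finset.univ.filter (fun f : Fin μ.length → Fin k =>
        (∑ i : Fin μ.length, Finsupp.single (f i) (μ.get i))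
          = Finsupp.equivFunOnFinite.symm d))
      = (Finset.univ.filter (fun f : Fin μ.length → Fin k =>
        ∀ j : Fin k,
          (∑ i ∈ Finset.univ.filter (fun i => f i = j), μ.get i) = d j)) := by
    ext f
    simp only [Finset.mem_filter, Finset.mem_univ, true_and]
    rw [Finsupp.ext_iff]
    refine forall_congr' (fun j => ?_)
    simp only [Finsupp.finset_sum_apply, Finsupp.single_apply, ← Finset.sum_filter,
      Finsupp.equivFunOnFinite_symm_apply_apply]
  rw [this]

end Aux

section Aux2

open MvPolynomial

variable (F : Type) [Field F]

lemma phi_pexpand (p : ℕ) (hp : p.Prime) [CharP F p] (k : ℕ) (l : List ℕ) :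
    phi F k l
      = ((pExpand p l).map (fun m => ∑ j : Fin k, (X j : MvPolynomial (Fin k) F) ^ m)).prod := by
  haveI : Fact p.Prime := ⟨hp⟩
  induction l with
  | nil => simp [phi, pExpand]
  | cons m t ih =>
    have h2 : pExpand p (m :: t)
        = Multiset.replicate (p ^ (m.factorization p)) (m / p ^ (m.factorization p))
            + pExpand p t := by
      rw [pExpand, pExpand, ← Multiset.cons_coe, Multiset.cons_bind]
    rw [h2, Multiset.map_add, Multiset.prod_add, ← ih]
    rw [phi, List.map_cons, List.prod_cons, ← phi]
    congr 1
    rw [Multiset.map_replicate, Multiset.prod_replicate, sum_pow_char_pow]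
    simp only [← pow_mul]
    rw [Nat.div_mul_cancel (Nat.ordProj_dvd m p)]

lemma cnt_succAbove (k : ℕ) (i : Fin (k + 1)) (d : Fin (k + 1) → ℕ) (hd : d i = 0)
    (μ : List ℕ) (hμ : ∀ x ∈ μ, 0 < x) :
    cnt (k + 1) d μ = cnt k (fun j => d (i.succAbove j)) μ := by
  classical
  rw [cnt, cnt]
  refine (Finset.card_bij (fun g _ => i.succAbove ∘ g) ?_ ?_ ?_).symm
  · -- maps into
    intro g hg
    simp only [Finset.mem_filter, Finset.mem_univ, true_and] at hg ⊢
    intro j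
    rcases eq_or_ne j i with h | hji
    · have : (Finset.univ.filter (fun a : Fin μ.length => (i.succAbove ∘ g) a = j)) = ∅ := by
        ext a
        subst h
        simp [Fin.succAbove_ne j (g a)]
      rw [this, h]
      simpa using hd.symm
    · obtain ⟨j', rfl⟩ := Fin.exists_succAbove_eq hji
      have : (Finset.univ.filter (fun a : Fin μ.length => (i.succAbove ∘ g) a = i.succAbove j'))
          = (Finset.univ.filter (fun a : Fin μ.length => g a = j')) := by
        ext a
        simp [Function.comp, Fin.succAbove_right_injective.eq_iff]
      rw [this]
      exact hg j'
  · -- injective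
    intro g₁ h₁ g₂ h₂ h
    funext a
    exact Fin.succAbove_right_injective (congrFun h a)
  · -- surjective
    intro f hf
    simp only [Finset.mem_filter, Finset.mem_univ, true_and] at hf
    have hne : ∀ a, f a ≠ i := by
      intro a ha
      have h0 := hf i
      rw [hd] at h0
      have hmem : a ∈ Finset.univ.filter (fun a : Fin μ.length => f a = i) := by
        simp [ha]
      have hga : (0:ℕ) < μ.get a := by
        have := hμ (μ.get a) (by simpa using List.get_mem μ a.1 a.2)
        simpa using this
      have hpos : 0 < ∑ x ∈ Finset.univ.filter (fun a : Fin μ.length => f a = i), μ.get x :=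
        Finset.sum_pos' (fun x _ => Nat.zero_le _) ⟨a, hmem, hga⟩
      omega
    choose g hg using fun a => Fin.exists_succAbove_eq (hne a)
    refine ⟨g, ?_, ?_⟩
    · simp only [Finset.mem_filter, Finset.mem_univ, true_and]
      intro j
      have : (Finset.univ.filter (fun a : Fin μ.length => g a = j))
          = (Finset.univ.filter (fun a : Fin μ.length => f a = i.succAbove j)) := by
        ext a
        simp only [Finset.mem_filter, Finset.mem_univ, true_and]
        constructor
        · rintro rfl
          exact (hg a).symm
        · intro h'
          apply Fin.succAbove_right_injective (p := i)
          rw [hg a, h']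
      rw [this]
      exact hf _
    · exact funext hg
  
end Aux2


open MvPolynomial

lemma list_set_eq_take_cons_drop {α : Type} :
    ∀ (l : List α) (i : ℕ), i < l.length → ∀ v : α,
      l.set i v = l.take i ++ [v] ++ l.drop (i + 1)
  | x :: xs, 0, _, v => by simp
  | x :: xs, i + 1, h, v => by
    simp only [List.set_cons_succ, List.take_succ_cons, List.drop_succ_cons,
      List.cons_append]
    rw [list_set_eq_take_cons_drop xs i (by simpa using h) v]

/-- Let `F` be a field of prime characteristic `p`, `n ≥ s ≥ 1`, and `μ` a `p`-regular
partition of `n - s`.  The pullback along `Δ_s : D_n(F) → D_{n-s}(F)` of the simple module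
`M_{μ,F}` is isomorphic to the simple module `M_{μ^{#s},F}`; equivalently, for every
composition `q` of `n`, `Σ_{i : q_i ≥ s} φ^{q^{(i)},F}(μ) = φ^{q,F}(μ^{#s})` in `F`.
Here `μ^{#s}` is the unique `p`-regular partition `p`-equivalent to `μ` with an extra part
`s` added (denoted `ν` below). -/
theorem sum_youngChar_reduceAt_eq_sharp (F : Type) [Field F] (p : ℕ) (hp : p.Prime)
    [CharP F p] (n s : ℕ) (hs : 1 ≤ s) (hn : s ≤ n) (μ : List ℕ)
    (hμ : IsPartition (n - s) μ) (hμreg : IsPRegular p μ)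
    (ν : List ℕ) (hν : IsPartition n ν) (hνreg : IsPRegular p ν)
    (hνeq : PEquiv p ν (μ ++ [s])) :
    ∀ q : List ℕ, IsComposition n q →
      (∑ i ∈ (Finset.range q.length).filter (fun i => s ≤ q.getD i 0),
        ((youngChar (reduceAt q i s) μ : F))) = (youngChar q ν : F) := by
  haveI : Fact p.Prime := ⟨hp⟩
  have hνeq' : pExpand p ν = pExpand p (μ ++ [s]) := hνeq
  rintro q ⟨hqpos, hqsum⟩
  cases q with
  | nil => simp at hqsum; omega
  | cons a t =>
  set d₂ : Fin (t.length + 1) → Fin (t.length + 1) → ℕ :=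
    fun j j' => if j' = j then (a :: t).get j - s else (a :: t).get j' with hd₂
  have hget : ∀ j : Fin (t.length + 1), (a :: t).getD (j : ℕ) 0 = (a :: t).get j := by
    intro j
    rw [List.getD_eq_getElem?_getD,
      List.getElem?_eq_getElem (show (j : ℕ) < (a :: t).length from j.isLt),
      Option.getD_some]
    simp [List.get_eq_getElem]
  -- per-index combinatorial identification
  have key : ∀ j : Fin (t.length + 1), s ≤ (a :: t).get j →
      youngChar (reduceAt (a :: t) (j : ℕ) s) μ = cnt (t.length + 1) (d₂ j) μ := by
    intro j hj
    rcases eq_or_lt_of_le hj with heq | hlt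
    · -- the part equals s: erase case
      have hred : reduceAt (a :: t) (j : ℕ) s = (a :: t).eraseIdx (j : ℕ) := by
        rw [reduceAt, hget j, if_pos heq.symm, List.eraseIdx_eq_take_drop_succ]
        simp
      have hlen : ((a :: t).eraseIdx (j : ℕ)).length = t.length := by
        have h1 := List.length_eraseIdx_add_one (l := a :: t) (i := (j : ℕ)) j.isLt
        simpa using h1
      have hd : ∀ j' : Fin t.length,
          ((a :: t).eraseIdx (j : ℕ)).getD (j' : ℕ) 0 = d₂ j (j.succAbove j') := by
        intro j'
        have hj' : (j' : ℕ) < ((a :: t).eraseIdx (j : ℕ)).length := by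
          rw [hlen]; exact j'.isLt
        rw [List.getD_eq_getElem?_getD, List.getElem?_eq_getElem hj', Option.getD_some,
          List.getElem_eraseIdx]
        have hne := Fin.succAbove_ne j j'
        simp only [hd₂, if_neg hne]
        rcases lt_or_ge (j' : ℕ) (j : ℕ) with h | h
        · rw [dif_pos h]
          have hsa : j.succAbove j' = j'.castSucc := Fin.succAbove_of_castSucc_lt _ _ (by
            rw [Fin.lt_def, Fin.coe_castSucc]; exact h)
          rw [hsa]
          simp [List.get_eq_getElem]
        · rw [dif_neg (not_lt.2 h)]
          have hsa : j.succAbove j' = j'.succ := Fin.succAbove_of_le_castSucc _ _ (by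
            rw [Fin.le_def, Fin.coe_castSucc]; exact h)
          rw [hsa]
          simp [List.get_eq_getElem]
      rw [hred, youngChar_eq_cnt' _ μ t.length hlen (fun j' => d₂ j (j.succAbove j')) hd]
      exact (cnt_succAbove t.length j (d₂ j) (by simp only [hd₂, if_pos rfl, List.get_eq_getElem]; rw [List.get_eq_getElem] at heq; omega) μ hμ.1.1).symm
    · -- the part exceeds s: set case
      have hred : reduceAt (a :: t) (j : ℕ) s
          = (a :: t).set (j : ℕ) ((a :: t).get j - s) := by
        rw [reduceAt, hget j, if_neg (by omega),
          list_set_eq_take_cons_drop (a :: t) (j : ℕ) j.isLt]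
      rw [hred]
      refine youngChar_eq_cnt' _ μ (t.length + 1) (by simp) (d₂ j) ?_
      intro j'
      have hj' : (j' : ℕ) < ((a :: t).set (j : ℕ) ((a :: t).get j - s)).length := by
        rw [List.length_set]; exact j'.isLt
      rw [List.getD_eq_getElem?_getD, List.getElem?_eq_getElem hj', Option.getD_some,
        List.getElem_set]
      simp only [hd₂]
      rcases eq_or_ne j' j with rfl | h
      · simp [List.get_eq_getElem]
      · have hvn : (j : ℕ) ≠ (j' : ℕ) := fun hh => h (Fin.ext hh.symm)
        rw [if_neg hvn, if_neg h]
        simp [List.get_eq_getElem]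
  -- polynomial computation
  have hmain :
      MvPolynomial.coeff
          (Finsupp.equivFunOnFinite.symm (fun j : Fin (t.length + 1) => (a :: t).get j))
          (phi F (t.length + 1) ν)
        = ∑ j : Fin (t.length + 1),
            if s ≤ (a :: t).get j then (cnt (t.length + 1) (d₂ j) μ : F) else 0 := by
    have h1 : phi F (t.length + 1) ν
        = phi F (t.length + 1) μ
          * ∑ j : Fin (t.length + 1), (X j : MvPolynomial (Fin (t.length + 1)) F) ^ s := by
      rw [phi_pexpand F p hp, hνeq', ← phi_pexpand F p hp, phi_append]
      congr 1
      simp [phi]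
    rw [h1, Finset.mul_sum, MvPolynomial.coeff_sum]
    refine Finset.sum_congr rfl (fun j _ => ?_)
    rw [X_pow_eq_monomial, MvPolynomial.coeff_mul_monomial']
    have hcond : (Finsupp.single j s
        ≤ Finsupp.equivFunOnFinite.symm (fun j : Fin (t.length + 1) => (a :: t).get j))
        ↔ s ≤ (a :: t).get j := by
      rw [Finsupp.single_le_iff]
      simp
    by_cases hc : s ≤ (a :: t).get j
    · rw [if_pos (hcond.mpr hc), if_pos hc, mul_one]
      have hsub : Finsupp.equivFunOnFinite.symm (fun j' : Fin (t.length + 1) => (a :: t).get j')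
            - Finsupp.single j s
          = Finsupp.equivFunOnFinite.symm (d₂ j) := by
        ext j'
        rw [Finsupp.tsub_apply]
        simp only [Finsupp.equivFunOnFinite_symm_apply_apply, Finsupp.single_apply, hd₂]
        rcases eq_or_ne j' j with rfl | h
        · simp
        · simp [h, Ne.symm h]
      rw [hsub, coeff_phi]
    · rw [if_neg (fun h => hc (hcond.mp h)), if_neg hc]
  -- conclude
  have hR : (youngChar (a :: t) ν : F)
      = MvPolynomial.coeff
          (Finsupp.equivFunOnFinite.symm (fun j : Fin (t.length + 1) => (a :: t).get j))
          (phi F (t.length + 1) ν) := by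
    rw [youngChar_eq_cnt]
    exact (coeff_phi F (t.length + 1) (fun j => (a :: t).get j) ν).symm
  rw [hR, hmain, Finset.sum_filter,
    ← Fin.sum_univ_eq_sum_range
      (fun i => if s ≤ (a :: t).getD i 0 then ((youngChar (reduceAt (a :: t) i s) μ : F)) else 0)
      (a :: t).length]
  refine Finset.sum_congr rfl (fun j _ => ?_)
  rw [hget j]
  by_cases hc : s ≤ (a :: t).get j
  · rw [if_pos hc, if_pos hc, key j hc]
  · rw [if_neg hc, if_neg hc]

end Descent
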